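/- Let F be a semifield (every nonzero element invertible) containing a copy of ℚ≥0, x ∈ F nonzero, and n ≥ 1. Define z := Σ_{j=-n}^{n} (1 - |j|/n)·x^j ∈ F. Then (x + x^{-1})·z equals 2·z + (1/n)(x^n + x^{-n}) - 2/n, in the sense that (x + x^{-1})·z + 2/n = 2·z + (1/n)(x^n + x^{-n}). -/

import Mathlib

open Finset

lemma shift_down {F : Type*} [Semifield F] (x : F) (hx : x ≠ 0) (a b : ℤ) (g : ℤ → F)
    (ha : g (a - 1) = 0) (hb : g b = 0) :
    x * ∑ k ∈ Finset.Icc a b, g k * x ^ k = ∑ k ∈ Finset.Icc a b, g (k - 1) * x ^ k := by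
  rw [Finset.mul_sum]
  have h1 : ∀ k : ℤ, x * (g k * x ^ k) = g k * x ^ (k + 1) := by
    intro k; rw [zpow_add_one₀ hx]; ring
  simp_rw [h1]
  have e0 : ∑ k ∈ Finset.Icc a b, g (k - 1) * x ^ k
      = ∑ k ∈ Finset.Icc (a - 1) (b - 1), g k * x ^ (k + 1) := by
    rw [show Finset.Icc a b = (Finset.Icc (a - 1) (b - 1)).map (addRightEmbedding 1) from by
      rw [Finset.map_add_right_Icc]; ring_nf]
    rw [Finset.sum_map]
    refine Finset.sum_congr rfl fun k _ => ?_
    simp [addRightEmbedding_apply]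
  rw [e0]
  have e1 : ∑ k ∈ Finset.Icc (a - 1) (b - 1), g k * x ^ (k + 1)
      = ∑ k ∈ Finset.Icc (a - 1) b, g k * x ^ (k + 1) := by
    apply Finset.sum_subset
    · intro k hk; simp only [Finset.mem_Icc] at *; omega
    · intro k hk hk'
      have : k = b := by simp only [Finset.mem_Icc] at *; omega
      rw [this, hb, zero_mul]
  have e2 : ∑ k ∈ Finset.Icc a b, g k * x ^ (k + 1)
      = ∑ k ∈ Finset.Icc (a - 1) b, g k * x ^ (k + 1) := by
    apply Finset.sum_subset
    · intro k hk; simp only [Finset.mem_Icc] at *; omega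
    · intro k hk hk'
      have : k = a - 1 := by simp only [Finset.mem_Icc] at *; omega
      rw [this, ha, zero_mul]
  rw [e1, ← e2]

lemma shift_up {F : Type*} [Semifield F] (x : F) (hx : x ≠ 0) (a b : ℤ) (g : ℤ → F)
    (ha : g a = 0) (hb : g (b + 1) = 0) :
    x⁻¹ * ∑ k ∈ Finset.Icc a b, g k * x ^ k = ∑ k ∈ Finset.Icc a b, g (k + 1) * x ^ k := by
  rw [Finset.mul_sum]
  have h1 : ∀ k : ℤ, x⁻¹ * (g k * x ^ k) = g k * x ^ (k - 1) := by
    intro k; rw [zpow_sub_one₀ hx]; ring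
  simp_rw [h1]
  have e0 : ∑ k ∈ Finset.Icc a b, g (k + 1) * x ^ k
      = ∑ k ∈ Finset.Icc (a + 1) (b + 1), g k * x ^ (k - 1) := by
    rw [show Finset.Icc a b = (Finset.Icc (a + 1) (b + 1)).map (addRightEmbedding (-1)) from by
      rw [Finset.map_add_right_Icc]; ring_nf]
    rw [Finset.sum_map]
    refine Finset.sum_congr rfl fun k _ => ?_
    have h2 : k + -1 + 1 = k := by ring
    have h3 : k + -1 = k - 1 := by ring
    rw [addRightEmbedding_apply, h2, h3]
  rw [e0]
  have e1 : ∑ k ∈ Finset.Icc (a + 1) (b + 1), g k * x ^ (k - 1)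
      = ∑ k ∈ Finset.Icc a (b + 1), g k * x ^ (k - 1) := by
    apply Finset.sum_subset
    · intro k hk; simp only [Finset.mem_Icc] at *; omega
    · intro k hk hk'
      have : k = a := by simp only [Finset.mem_Icc] at *; omega
      rw [this, ha, zero_mul]
  have e2 : ∑ k ∈ Finset.Icc a b, g k * x ^ (k - 1)
      = ∑ k ∈ Finset.Icc a (b + 1), g k * x ^ (k - 1) := by
    apply Finset.sum_subset
    · intro k hk; simp only [Finset.mem_Icc] at *; omega
    · intro k hk hk'
      have : k = b + 1 := by simp only [Finset.mem_Icc] at *; omega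
      rw [this, hb, zero_mul]
  rw [e1, ← e2]

lemma nat_div_comb (a b c d e g : ℕ) (q : ℚ≥0)
    (h : a + b + c = 2 * d + e + g) :
    (a : ℚ≥0) / q + (b : ℚ≥0) / q + (c : ℚ≥0) / q
      = 2 * ((d : ℚ≥0) / q) + (e : ℚ≥0) / q + (g : ℚ≥0) / q := by
  have h' : ((a : ℚ≥0) + b + c) = 2 * (d : ℚ≥0) + e + g := by
    exact_mod_cast congrArg (Nat.cast : ℕ → ℚ≥0) h
  rw [← add_div, ← add_div, ← mul_div_assoc, ← add_div,
    ← add_div, h']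

/-- The embezzlement identity: for nonzero `x` in a semifield of characteristic zero and
`z := Σ_{j=-n}^{n} (1 - |j|/n)·x^j`, one has
`(x + x⁻¹)·z + 2/n = 2·z + (1/n)(x^n + x^{-n})`. -/
theorem stmt6 {F : Type*} [Semifield F] [CharZero F]
    (x : F) (hx : x ≠ 0) (n : ℕ) (hn : 1 ≤ n) :
    (x + x⁻¹) * (∑ j ∈ Finset.Icc (-(n : ℤ)) (n : ℤ),
        ((1 - (j.natAbs : ℚ≥0) / (n : ℚ≥0) : ℚ≥0) : F) * x ^ j) +
      ((2 / (n : ℚ≥0) : ℚ≥0) : F) =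
    2 * (∑ j ∈ Finset.Icc (-(n : ℤ)) (n : ℤ),
        ((1 - (j.natAbs : ℚ≥0) / (n : ℚ≥0) : ℚ≥0) : F) * x ^ j) +
      ((1 / (n : ℚ≥0) : ℚ≥0) : F) * (x ^ (n : ℤ) + x ^ (-(n : ℤ))) := by
  have hn0 : (n : ℚ≥0) ≠ 0 := Nat.cast_ne_zero.mpr (by omega)
  set f : ℤ → ℚ≥0 := fun k => ((n - k.natAbs : ℕ) : ℚ≥0) / (n : ℚ≥0) with hf
  have hf0 : ∀ k : ℤ, (n : ℤ) < k ∨ k < -(n : ℤ) → f k = 0 := by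
    intro k hk
    have h : n - k.natAbs = 0 := by omega
    show ((n - k.natAbs : ℕ) : ℚ≥0) / (n : ℚ≥0) = 0
    rw [h, Nat.cast_zero, zero_div]
  have hAB : (∑ j ∈ Finset.Icc (-(n : ℤ)) (n : ℤ),
        ((1 - (j.natAbs : ℚ≥0) / (n : ℚ≥0) : ℚ≥0) : F) * x ^ j)
      = ∑ j ∈ Finset.Icc (-(n : ℤ) - 1) ((n : ℤ) + 1), ((f j : F)) * x ^ j := by
    rw [show (∑ j ∈ Finset.Icc (-(n : ℤ)) (n : ℤ),
        ((1 - (j.natAbs : ℚ≥0) / (n : ℚ≥0) : ℚ≥0) : F) * x ^ j)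
        = ∑ j ∈ Finset.Icc (-(n : ℤ)) (n : ℤ), ((f j : F)) * x ^ j from ?_]
    · apply Finset.sum_subset
      · intro k hk; simp only [Finset.mem_Icc] at *; omega
      · intro k hk hk'
        have h0 : f k = 0 := by
          apply hf0; simp only [Finset.mem_Icc] at *; omega
        rw [h0]; simp
    · refine Finset.sum_congr rfl fun j hj => ?_
      congr 2
      show (1 - (j.natAbs : ℚ≥0) / (n : ℚ≥0)) = ((n - j.natAbs : ℕ) : ℚ≥0) / (n : ℚ≥0)
      rw [Nat.cast_tsub, tsub_div, div_self hn0]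
  rw [hAB]
  set S := Finset.Icc (-(n : ℤ) - 1) ((n : ℤ) + 1) with hS
  have hdown : x * ∑ j ∈ S, ((f j : F)) * x ^ j = ∑ j ∈ S, ((f (j - 1) : F)) * x ^ j := by
    apply shift_down x hx _ _ (fun k => ((f k : F)))
    · show ((f (-(n:ℤ) - 1 - 1) : F)) = 0
      rw [hf0 (-(n:ℤ) - 1 - 1) (by omega)]; simp
    · show ((f ((n:ℤ) + 1) : F)) = 0
      rw [hf0 ((n:ℤ) + 1) (by omega)]; simp
  have hup : x⁻¹ * ∑ j ∈ S, ((f j : F)) * x ^ j = ∑ j ∈ S, ((f (j + 1) : F)) * x ^ j := by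
    apply shift_up x hx _ _ (fun k => ((f k : F)))
    · show ((f (-(n:ℤ) - 1) : F)) = 0
      rw [hf0 (-(n:ℤ) - 1) (by omega)]; simp
    · show ((f ((n:ℤ) + 1 + 1) : F)) = 0
      rw [hf0 ((n:ℤ) + 1 + 1) (by omega)]; simp
  have hone : ∀ c : ℤ, c ∈ S → ∀ q : ℚ≥0,
      ∑ k ∈ S, ((if k = c then q else 0 : ℚ≥0) : F) * x ^ k = (q : F) * x ^ c := by
    intro c hc q
    rw [Finset.sum_eq_single c]
    · simp
    · intro k hk hk0; simp [hk0]
    · intro h; exact absurd hc h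
  have hmem0 : (0 : ℤ) ∈ S := by simp only [hS, Finset.mem_Icc]; omega
  have hmemN : ((n : ℤ)) ∈ S := by simp only [hS, Finset.mem_Icc]; omega
  have hmemN' : (-(n : ℤ)) ∈ S := by simp only [hS, Finset.mem_Icc]; omega
  have hc2 : ((2 / (n : ℚ≥0) : ℚ≥0) : F)
      = ∑ k ∈ S, ((if k = 0 then (2 / (n : ℚ≥0) : ℚ≥0) else 0 : ℚ≥0) : F) * x ^ k := by
    rw [hone 0 hmem0]; simp
  have hcN : ((1 / (n : ℚ≥0) : ℚ≥0) : F) * (x ^ (n : ℤ) + x ^ (-(n : ℤ)))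
      = ∑ k ∈ S, (((if k = (n : ℤ) then (1 / (n : ℚ≥0) : ℚ≥0) else 0)
          + (if k = -(n : ℤ) then (1 / (n : ℚ≥0) : ℚ≥0) else 0) : ℚ≥0) : F) * x ^ k := by
    have hsplit : ∀ k : ℤ, (((if k = (n : ℤ) then (1 / (n : ℚ≥0) : ℚ≥0) else 0)
          + (if k = -(n : ℤ) then (1 / (n : ℚ≥0) : ℚ≥0) else 0) : ℚ≥0) : F) * x ^ k
        = ((if k = (n : ℤ) then (1 / (n : ℚ≥0) : ℚ≥0) else 0 : ℚ≥0) : F) * x ^ k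
          + ((if k = -(n : ℤ) then (1 / (n : ℚ≥0) : ℚ≥0) else 0 : ℚ≥0) : F) * x ^ k := by
      intro k; push_cast; ring
    simp_rw [hsplit]
    rw [Finset.sum_add_distrib, hone _ hmemN, hone _ hmemN', mul_add]
  -- key pointwise identity in ℚ≥0
  have key : ∀ k : ℤ, f (k - 1) + f (k + 1) + (if k = 0 then 2 / (n : ℚ≥0) else 0)
      = 2 * f k + (if k = (n : ℤ) then 1 / (n : ℚ≥0) else 0)
        + (if k = -(n : ℤ) then 1 / (n : ℚ≥0) else 0) := by
    intro k
    have hnum : (n - (k - 1).natAbs) + (n - (k + 1).natAbs) + (if k = 0 then 2 else 0)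
        = 2 * (n - k.natAbs) + (if k = (n : ℤ) then 1 else 0)
          + (if k = -(n : ℤ) then 1 else 0) := by
      split_ifs <;> omega
    have h0 : (if k = 0 then 2 / (n : ℚ≥0) else 0)
        = ((if k = 0 then 2 else 0 : ℕ) : ℚ≥0) / (n : ℚ≥0) := by
      split_ifs <;> simp
    have hN : (if k = (n : ℤ) then 1 / (n : ℚ≥0) else 0)
        = ((if k = (n : ℤ) then 1 else 0 : ℕ) : ℚ≥0) / (n : ℚ≥0) := by
      split_ifs <;> simp
    have hN' : (if k = -(n : ℤ) then 1 / (n : ℚ≥0) else 0)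
        = ((if k = -(n : ℤ) then 1 else 0 : ℕ) : ℚ≥0) / (n : ℚ≥0) := by
      split_ifs <;> simp
    rw [h0, hN, hN']
    exact nat_div_comb _ _ _ _ _ _ _ hnum
  -- assemble
  rw [add_mul, hdown, hup, hc2, hcN, Finset.mul_sum]
  simp only [← Finset.sum_add_distrib]
  refine Finset.sum_congr rfl fun k hk => ?_
  calc ((f (k - 1) : F)) * x ^ k + ((f (k + 1) : F)) * x ^ k
        + ((if k = 0 then (2 / (n : ℚ≥0) : ℚ≥0) else 0 : ℚ≥0) : F) * x ^ k
      = ((f (k - 1) + f (k + 1) + (if k = 0 then 2 / (n : ℚ≥0) else 0) : ℚ≥0) : F) * x ^ k := by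
        push_cast; ring
    _ = ((2 * f k + (if k = (n : ℤ) then 1 / (n : ℚ≥0) else 0)
          + (if k = -(n : ℤ) then 1 / (n : ℚ≥0) else 0) : ℚ≥0) : F) * x ^ k := by
        rw [key k]
    _ = 2 * (((f k : F)) * x ^ k)
        + (((if k = (n : ℤ) then (1 / (n : ℚ≥0) : ℚ≥0) else 0)
          + (if k = -(n : ℤ) then (1 / (n : ℚ≥0) : ℚ≥0) else 0) : ℚ≥0) : F) * x ^ k := by
        push_cast; ring
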